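/- For all integers M ≥ 2 and all m ∈ {0,1,...,M-1}, 1/2 - m/M + m²/M² = 1/3 + 1/(6M²) + (1/(2M²))·∑_{n=1}^{M-1} cos(2πmn/M)/sin²(πn/M). -/

import Mathlib

open Finset

-- Dirichlet kernel
lemma dir (x : ℝ) : ∀ m : ℕ, Real.sin ((2*m+1)*x)
    = Real.sin x * (1 + 2 * ∑ k ∈ Finset.Icc 1 m, Real.cos (2*k*x)) := by
  intro m
  induction m with
  | zero => simp
  | succ m ih =>
    have key : Real.sin ((2*((m:ℝ)+1)+1)*x)
        = Real.sin ((2*(m:ℝ)+1)*x) + 2 * Real.sin x * Real.cos (2*((m:ℝ)+1)*x) := by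
      have h := Real.sin_sub_sin ((2*((m:ℝ)+1)+1)*x) ((2*(m:ℝ)+1)*x)
      have e1 : ((2*((m:ℝ)+1)+1)*x - (2*(m:ℝ)+1)*x)/2 = x := by ring
      have e2 : ((2*((m:ℝ)+1)+1)*x + (2*(m:ℝ)+1)*x)/2 = 2*((m:ℝ)+1)*x := by ring
      rw [e1, e2] at h
      linarith
    rw [Finset.sum_Icc_succ_top (by omega : 1 ≤ m+1)]
    push_cast
    push_cast at ih
    rw [key, ih]
    ring

lemma drop_top (m : ℕ) (f : ℕ → ℝ) :
    ∑ k ∈ Finset.Icc 1 m, ((m:ℝ) - k) * f k = ∑ k ∈ Finset.Ioo 0 m, ((m:ℝ) - k) * f k := by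
  cases m with
  | zero => simp
  | succ μ =>
    have h : Finset.Ioo 0 (μ+1) = Finset.Icc 1 μ := by ext a; simp; omega
    rw [h, Finset.sum_Icc_succ_top (by omega : 1 ≤ μ+1)]
    push_cast
    simp

-- Fejér kernel
lemma fejer (x : ℝ) : ∀ m : ℕ, Real.sin (m*x)^2
    = Real.sin x^2 * (m + 2 * ∑ k ∈ Finset.Ioo 0 m, ((m:ℝ) - k) * Real.cos (2*k*x)) := by
  intro m
  induction m with
  | zero => simp
  | succ m ih =>
    have hsq : ∀ t : ℝ, Real.sin t ^ 2 = 1/2 - Real.cos (2*t)/2 := by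
      intro t
      have := Real.cos_sq t
      have := Real.sin_sq t
      linarith
    have diff : Real.sin (((m:ℝ)+1)*x)^2
        = Real.sin ((m:ℝ)*x)^2 + Real.sin x * Real.sin ((2*(m:ℝ)+1)*x) := by
      have h := Real.cos_sub_cos (2*((m:ℝ)*x)) (2*(((m:ℝ)+1)*x))
      have e1 : (2*((m:ℝ)*x) + 2*(((m:ℝ)+1)*x))/2 = (2*(m:ℝ)+1)*x := by ring
      have e2 : (2*((m:ℝ)*x) - 2*(((m:ℝ)+1)*x))/2 = -x := by ring
      rw [e1, e2, Real.sin_neg] at h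
      rw [hsq, hsq ((m:ℝ)*x)]
      linarith
    have hd := dir x m
    have hioo : Finset.Ioo 0 (m+1) = Finset.Icc 1 m := by ext a; simp; omega
    have hsplit : ∑ k ∈ Finset.Icc 1 m, (((m:ℝ)+1) - k) * Real.cos (2*k*x)
        = (∑ k ∈ Finset.Ioo 0 m, ((m:ℝ) - k) * Real.cos (2*k*x))
          + ∑ k ∈ Finset.Icc 1 m, Real.cos (2*k*x) := by
      rw [← drop_top]
      rw [← Finset.sum_add_distrib]
      apply Finset.sum_congr rfl
      intro k _
      ring
    push_cast
    rw [diff, ih, hioo, hsplit, hd]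
    ring

lemma cos_sum (M k : ℕ) (hk0 : 0 < k) (hkM : k < M) :
    ∑ n ∈ Finset.range M, Real.cos (2*Real.pi*k*n/M) = 0 := by
  have hMpos : 0 < M := lt_trans hk0 hkM
  have hM0 : (M:ℝ) ≠ 0 := Nat.cast_ne_zero.mpr (by omega)
  have hM0' : (M:ℂ) ≠ 0 := Nat.cast_ne_zero.mpr (by omega)
  set z : ℂ := Complex.exp (((2*Real.pi*k/M : ℝ) : ℂ) * Complex.I) with hz
  have hz1 : z ≠ 1 := by
    rw [hz, Ne, Complex.exp_eq_one_iff]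
    rintro ⟨n, hn⟩
    have hr : (2*Real.pi*k/M : ℝ) = (n:ℝ) * (2*Real.pi) := by
      have h2 := congrArg Complex.im hn
      simpa using h2
    have hk : (k:ℝ) = (n:ℝ) * M := by
      have hpi := Real.pi_ne_zero
      field_simp at hr
      nlinarith [hr, Real.pi_pos]
    have hkZ : (k:ℤ) = n * M := by exact_mod_cast hk
    have hMZ : (0:ℤ) < (M:ℤ) := by exact_mod_cast hMpos
    have hk0Z : (0:ℤ) < (k:ℤ) := by exact_mod_cast hk0
    have hkMZ : (k:ℤ) < (M:ℤ) := by exact_mod_cast hkM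
    rcases le_or_gt n 0 with h | h
    · have := mul_nonpos_of_nonpos_of_nonneg h (le_of_lt hMZ)
      linarith
    · have h1 : (1:ℤ) ≤ n := h
      have := le_mul_of_one_le_left (le_of_lt hMZ) h1
      linarith
  have hzM : z ^ M = 1 := by
    rw [hz, ← Complex.exp_nat_mul]
    have harg : (M:ℂ) * (((2*Real.pi*k/M : ℝ) : ℂ) * Complex.I)
        = ((k:ℤ):ℂ) * (2*(Real.pi:ℂ)*Complex.I) := by
      push_cast
      field_simp
    rw [harg, Complex.exp_int_mul_two_pi_mul_I]
  have hsum : ∑ n ∈ Finset.range M, z ^ n = 0 := by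
    rw [geom_sum_eq hz1, hzM]
    simp
  have hterm : ∀ n : ℕ, Real.cos (2*Real.pi*k*n/M) = (z ^ n).re := by
    intro n
    rw [hz, ← Complex.exp_nat_mul]
    have : (n:ℂ) * (((2*Real.pi*k/M : ℝ) : ℂ) * Complex.I)
        = ((2*Real.pi*k*n/M : ℝ) : ℂ) * Complex.I := by
      push_cast
      ring
    rw [this, Complex.exp_ofReal_mul_I_re]
  calc ∑ n ∈ Finset.range M, Real.cos (2*Real.pi*k*n/M)
      = ∑ n ∈ Finset.range M, (z ^ n).re := Finset.sum_congr rfl (fun n _ => hterm n)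
    _ = (∑ n ∈ Finset.range M, z ^ n).re := (Complex.re_sum _ _).symm
    _ = 0 := by rw [hsum]; rfl

lemma cos_sum_Icc (M k : ℕ) (hM : 2 ≤ M) (hk0 : 0 < k) (hkM : k < M) :
    ∑ n ∈ Finset.Icc 1 (M-1), Real.cos (2*Real.pi*k*n/M) = -1 := by
  have hr : Finset.range M = insert 0 (Finset.Icc 1 (M-1)) := by
    ext a; simp [Finset.mem_range, Finset.mem_Icc]; omega
  have h := cos_sum M k hk0 hkM
  rw [hr, Finset.sum_insert (by simp)] at h
  simp at h
  linarith

lemma gauss : ∀ m : ℕ, ∑ k ∈ Finset.Ioo 0 m, ((m:ℝ) - k) = m*(m-1)/2 := by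
  intro m
  induction m with
  | zero => simp
  | succ m ih =>
    have hioo : Finset.Ioo 0 (m+1) = Finset.Icc 1 m := by ext a; simp; omega
    have h1 : ∑ k ∈ Finset.Icc 1 m, (((m:ℝ)+1) - k)
        = (∑ k ∈ Finset.Icc 1 m, ((m:ℝ) - k)) + ∑ k ∈ Finset.Icc 1 m, (1:ℝ) := by
      rw [← Finset.sum_add_distrib]
      exact Finset.sum_congr rfl fun k _ => by ring
    have h2 : ∑ k ∈ Finset.Icc 1 m, ((m:ℝ) - k) = ∑ k ∈ Finset.Ioo 0 m, ((m:ℝ) - k) := by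
      have := drop_top m (fun _ => (1:ℝ))
      simpa using this
    have hcard : ∑ k ∈ Finset.Icc 1 m, (1:ℝ) = m := by
      simp [Finset.sum_const, Nat.card_Icc]
    push_cast
    rw [hioo, h1, h2, ih, hcard]
    ring

lemma pointwise (M m n : ℕ) (hs : Real.sin (Real.pi*n/M) ≠ 0) :
    Real.cos (2*Real.pi*m*n/M) / Real.sin (Real.pi*n/M)^2
      = 1 / Real.sin (Real.pi*n/M)^2 - 2*m
        - 4*∑ k ∈ Finset.Ioo 0 m, ((m:ℝ)-k) * Real.cos (2*Real.pi*k*n/M) := by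
  set θ := Real.pi*(n:ℝ)/M with hθ
  have hf := fejer θ m
  have hc : Real.cos (2*Real.pi*m*n/M) = 1 - 2 * Real.sin ((m:ℝ)*θ)^2 := by
    have h1 := Real.cos_two_mul ((m:ℝ)*θ)
    have h2 := Real.sin_sq ((m:ℝ)*θ)
    have e : 2*Real.pi*(m:ℝ)*n/M = 2*((m:ℝ)*θ) := by rw [hθ]; ring
    rw [e]; linarith
  have hsum : ∑ k ∈ Finset.Ioo 0 m, ((m:ℝ)-k) * Real.cos (2*(k:ℝ)*θ)
      = ∑ k ∈ Finset.Ioo 0 m, ((m:ℝ)-k) * Real.cos (2*Real.pi*k*n/M) := by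
    refine Finset.sum_congr rfl fun k _ => ?_
    rw [show 2*(k:ℝ)*θ = 2*Real.pi*k*n/M by rw [hθ]; ring]
  rw [hc, hf, hsum]
  have h2 : Real.sin θ ^ 2 ≠ 0 := pow_ne_zero 2 hs
  generalize ∑ k ∈ Finset.Ioo 0 m, ((m:ℝ)-k) * Real.cos (2*Real.pi*k*n/M) = S
  field_simp
  ring

lemma sin_ne (M n : ℕ) (hM : 2 ≤ M) (hn : n ∈ Finset.Icc 1 (M-1)) :
    Real.sin (Real.pi*n/M) ≠ 0 := by
  rw [Finset.mem_Icc] at hn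
  have hM0 : (0:ℝ) < M := by exact_mod_cast (by omega : 0 < M)
  have hnp : (0:ℝ) < n := by exact_mod_cast (by omega : 0 < n)
  have hlt : (n:ℝ) < M := by exact_mod_cast (by omega : n < M)
  have h1 : 0 < Real.pi*n/M := div_pos (mul_pos Real.pi_pos hnp) hM0
  have h2 : Real.pi*n/M < Real.pi := by
    rw [div_lt_iff₀ hM0]
    nlinarith [Real.pi_pos]
  exact ne_of_gt (Real.sin_pos_of_pos_of_lt_pi h1 h2)

lemma Ssum (M : ℕ) (hM : 2 ≤ M) (m : ℕ) (hm : m ≤ M) :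
    ∑ n ∈ Finset.Icc 1 (M-1), Real.cos (2*Real.pi*m*n/M) / Real.sin (Real.pi*n/M)^2
      = (∑ n ∈ Finset.Icc 1 (M-1), 1 / Real.sin (Real.pi*n/M)^2)
        - 2*m*M + 2*m^2 := by
  have hstep : ∀ n ∈ Finset.Icc 1 (M-1),
      Real.cos (2*Real.pi*m*n/M) / Real.sin (Real.pi*n/M)^2
        = 1 / Real.sin (Real.pi*n/M)^2 - 2*m
          - 4*∑ k ∈ Finset.Ioo 0 m, ((m:ℝ)-k) * Real.cos (2*Real.pi*k*n/M) :=
    fun n hn => pointwise M m n (sin_ne M n hM hn)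
  rw [Finset.sum_congr rfl hstep, Finset.sum_sub_distrib, Finset.sum_sub_distrib,
    Finset.sum_const, ← Finset.mul_sum, Finset.sum_comm]
  have hin : ∀ k ∈ Finset.Ioo 0 m,
      ∑ n ∈ Finset.Icc 1 (M-1), ((m:ℝ)-k) * Real.cos (2*Real.pi*k*n/M) = -((m:ℝ)-k) := by
    intro k hk
    rw [Finset.mem_Ioo] at hk
    rw [← Finset.mul_sum, cos_sum_Icc M k hM hk.1 (lt_of_lt_of_le hk.2 hm)]
    ring
  rw [Finset.sum_congr rfl hin]
  have hneg : ∑ k ∈ Finset.Ioo 0 m, -((m:ℝ)-k) = -(m*((m:ℝ)-1)/2) := by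
    rw [Finset.sum_neg_distrib, gauss]
  rw [hneg, Nat.card_Icc]
  have hcard : (M - 1 + 1 - 1 : ℕ) = M - 1 := by omega
  rw [hcard]
  have hMcast : ((M-1 : ℕ) : ℝ) = (M:ℝ) - 1 := by
    push_cast [Nat.cast_sub (by omega : 1 ≤ M)]
    ring
  rw [nsmul_eq_mul, hMcast]
  ring

lemma sumid (M : ℕ) : ∑ m ∈ Finset.range M, (m:ℝ) = M*((M:ℝ)-1)/2 := by
  induction M with
  | zero => simp
  | succ M ih => rw [Finset.sum_range_succ, ih]; push_cast; ring

lemma sumsq (M : ℕ) : ∑ m ∈ Finset.range M, (m:ℝ)^2 = M*((M:ℝ)-1)*(2*M-1)/6 := by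
  induction M with
  | zero => simp
  | succ M ih => rw [Finset.sum_range_succ, ih]; push_cast; ring

lemma Tval (M : ℕ) (hM : 2 ≤ M) :
    ∑ n ∈ Finset.Icc 1 (M-1), 1 / Real.sin (Real.pi*n/M)^2 = ((M:ℝ)^2 - 1)/3 := by
  have hM0 : (M:ℝ) ≠ 0 := Nat.cast_ne_zero.mpr (by omega)
  set T := ∑ n ∈ Finset.Icc 1 (M-1), 1 / Real.sin (Real.pi*n/M)^2 with hT
  have h0 : ∑ m ∈ Finset.range M, (∑ n ∈ Finset.Icc 1 (M-1),
      Real.cos (2*Real.pi*m*n/M) / Real.sin (Real.pi*n/M)^2) = 0 := by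
    rw [Finset.sum_comm]
    apply Finset.sum_eq_zero
    intro n hn
    rw [Finset.mem_Icc] at hn
    have hc : ∑ m ∈ Finset.range M, Real.cos (2*Real.pi*m*n/M) = 0 := by
      rw [Finset.sum_congr rfl (fun m _ => by
        rw [show 2*Real.pi*(m:ℝ)*n/M = 2*Real.pi*(n:ℝ)*m/M from by ring])]
      exact cos_sum M n (by omega) (by omega)
    rw [← Finset.sum_div, hc, zero_div]
  rw [Finset.sum_congr rfl (fun m hm => Ssum M hM m (le_of_lt (Finset.mem_range.mp hm)))] at h0
  have a1 : ∑ m ∈ Finset.range M, 2*(m:ℝ)*M = 2*M*(M*((M:ℝ)-1)/2) := by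
    rw [show (2:ℝ)*M*(M*((M:ℝ)-1)/2) = 2*M*∑ m ∈ Finset.range M, (m:ℝ) from by rw [sumid]]
    rw [Finset.mul_sum]
    exact Finset.sum_congr rfl fun _ _ => by ring
  have a2 : ∑ m ∈ Finset.range M, 2*(m:ℝ)^2 = 2*(M*((M:ℝ)-1)*(2*M-1)/6) := by
    rw [show (2:ℝ)*(M*((M:ℝ)-1)*(2*(M:ℝ)-1)/6) = 2*∑ m ∈ Finset.range M, (m:ℝ)^2 from by rw [sumsq]]
    rw [Finset.mul_sum]
  rw [Finset.sum_add_distrib, Finset.sum_sub_distrib, Finset.sum_const, Finset.card_range,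
    a1, a2, nsmul_eq_mul] at h0
  apply mul_left_cancel₀ hM0
  linear_combination h0

theorem stmt_6 (M : ℕ) (hM : 2 ≤ M) (m : ℕ) (hm : m < M) :
    (1 : ℝ) / 2 - (m : ℝ) / M + (m : ℝ) ^ 2 / (M : ℝ) ^ 2 =
      1 / 3 + 1 / (6 * (M : ℝ) ^ 2) +
        (1 / (2 * (M : ℝ) ^ 2)) *
          ∑ n ∈ Finset.Icc 1 (M - 1),
            Real.cos (2 * Real.pi * m * n / M) / (Real.sin (Real.pi * n / M)) ^ 2 := by
  rw [Ssum M hM m (le_of_lt hm), Tval M hM]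
  have hM0 : (M:ℝ) ≠ 0 := Nat.cast_ne_zero.mpr (by omega)
  field_simp
  ring
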